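/- Let A be a commutative complex Banach algebra with identity 1, let a ∈ A, and let b be a recurrent vector for M_a, witnessed by a strictly increasing sequence (n_k) of positive integers with a^{n_k} b → b in A. Then for every character φ in the maximal ideal space X of A with φ(b) ≠ 0, one has (φ(a))^{n_k} → 1 as k → ∞, and consequently |φ(a)| = 1. -/

import Mathlib

open Filter Topology

/-- If `b` is a recurrent vector for the multiplication operator `M_a`
on a commutative complex Banach algebra `A`, witnessed by the strictly increasing
sequence `(n_k)` of positive integers, then for every character `φ` of `A` with
`φ(b) ≠ 0` one has `(φ(a))^{n_k} → 1`, and consequently `|φ(a)| = 1`. -/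
theorem character_unimodular_of_recurrent_vector
    (A : Type*) [NormedCommRing A] [NormedAlgebra ℂ A] [CompleteSpace A]
    (a b : A) (n : ℕ → ℕ) (hmono : StrictMono n) (hpos : ∀ k, 0 < n k)
    (hb : Tendsto (fun k => a ^ n k * b) atTop (𝓝 b))
    (φ : WeakDual.characterSpace ℂ A) (hφb : φ b ≠ 0) :
    Tendsto (fun k => (φ a) ^ n k) atTop (𝓝 1) ∧ ‖φ a‖ = 1 := by
  have hcont : Continuous φ := map_continuous φ
  have h1 : Tendsto (fun k => φ (a ^ n k * b)) atTop (𝓝 (φ b)) :=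
    (hcont.tendsto b).comp hb
  have h2 : Tendsto (fun k => (φ a) ^ n k * φ b) atTop (𝓝 (φ b)) := by
    simpa [map_mul, map_pow] using h1
  have h3 : Tendsto (fun k => (φ a) ^ n k) atTop (𝓝 1) := by
    have := h2.div_const (φ b)
    simpa [mul_div_assoc, div_self hφb] using this
  refine ⟨h3, ?_⟩
  have hn : Tendsto (fun k => ‖(φ a) ^ n k‖) atTop (𝓝 1) := by
    simpa using h3.norm
  have hn' : Tendsto (fun k => ‖φ a‖ ^ n k) atTop (𝓝 1) := by
    simpa [norm_pow] using hn
  have hnt : Tendsto n atTop atTop := hmono.tendsto_atTop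
  rcases lt_trichotomy ‖φ a‖ 1 with h | h | h
  · exfalso
    have h0 : Tendsto (fun k => ‖φ a‖ ^ n k) atTop (𝓝 0) :=
      (tendsto_pow_atTop_nhds_zero_of_lt_one (norm_nonneg _) h).comp hnt
    exact one_ne_zero (tendsto_nhds_unique hn' h0)
  · exact h
  · exfalso
    have h0 : Tendsto (fun k => ‖φ a‖ ^ n k) atTop atTop :=
      (tendsto_pow_atTop_atTop_of_one_lt h).comp hnt
    exact not_tendsto_atTop_of_tendsto_nhds hn' h0
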